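/- Let k ≥ 2 and q ≥ 1 be integers and let h be as above. Then for every real c > 1/q, ∑_{n=1}^∞ |h(n)|/n^c ≤ (k−1) · (1 − k^{−qc})^{−1} · ζ(qc), where ζ is the Riemann zeta function. -/

import Mathlib

open scoped Classical

noncomputable def bAux (k n : ℕ) : ℤ := if k ∣ n then 1 - (k : ℤ) else 1

noncomputable def fAux (k q d : ℕ) : ℤ := if ∃ n : ℕ, d = k ^ (q * n) then 1 else 0

noncomputable def gAux (k q d : ℕ) : ℤ :=
  if ∃ n : ℕ, 0 < n ∧ d = n ^ q ∧ k ∣ n then 1 - (k : ℤ)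
  else if ∃ n : ℕ, 0 < n ∧ d = n ^ q then 1 else 0

noncomputable def hAux (k q n : ℕ) : ℤ :=
  ∑ d ∈ n.divisors, fAux k q d * gAux k q (n / d)

noncomputable def FnAux (k q n : ℕ) : Finset (ℕ × ℕ) :=
  (Finset.range (n + 2) ×ˢ Finset.range (n + 2)).filter
    (fun p : ℕ × ℕ => k ^ (q * p.1) * (p.2 + 1) ^ q = n + 1)

set_option maxHeartbeats 1000000 in
lemma habs_le (k q : ℕ) (hk : 2 ≤ k) (hq : 1 ≤ q) (n : ℕ) :
    |hAux k q (n + 1)| ≤ ((k : ℤ) - 1) * (FnAux k q n).card := by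
  classical
  set N := n + 1 with hN
  set S := N.divisors.filter (fun d => fAux k q d ≠ 0 ∧ gAux k q (N / d) ≠ 0) with hS
  have h1 : |hAux k q N| ≤ ∑ d ∈ N.divisors, |fAux k q d * gAux k q (N / d)| :=
    Finset.abs_sum_le_sum_abs _ _
  have hterm : ∀ d : ℕ, |fAux k q d * gAux k q (N / d)| ≤
      if fAux k q d ≠ 0 ∧ gAux k q (N / d) ≠ 0 then (k : ℤ) - 1 else 0 := by
    intro d
    by_cases h : fAux k q d ≠ 0 ∧ gAux k q (N / d) ≠ 0
    · rw [if_pos h]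
      have hf : |fAux k q d| ≤ 1 := by
        unfold fAux; split
        · simp
        · simp
      have hg : |gAux k q (N / d)| ≤ (k : ℤ) - 1 := by
        unfold gAux
        split
        · rw [abs_sub_comm, abs_of_nonneg] <;> omega
        · split
          · rw [abs_one]; omega
          · simp; omega
      calc |fAux k q d * gAux k q (N / d)| = |fAux k q d| * |gAux k q (N / d)| := abs_mul _ _
        _ ≤ 1 * ((k : ℤ) - 1) := by
            apply mul_le_mul hf hg (abs_nonneg _) zero_le_one
        _ = (k : ℤ) - 1 := one_mul _
    · rw [if_neg h]
      rcases not_and_or.mp h with h' | h' <;> simp only [ne_eq, not_not] at h' <;>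
        simp [h', abs_mul]
  have h2 : ∑ d ∈ N.divisors, |fAux k q d * gAux k q (N / d)| ≤ ((k : ℤ) - 1) * S.card := by
    calc ∑ d ∈ N.divisors, |fAux k q d * gAux k q (N / d)|
        ≤ ∑ d ∈ N.divisors, if fAux k q d ≠ 0 ∧ gAux k q (N / d) ≠ 0 then (k : ℤ) - 1 else 0 :=
          Finset.sum_le_sum fun d _ => hterm d
      _ = ∑ _d ∈ S, ((k : ℤ) - 1) := (Finset.sum_filter _ _).symm
      _ = ((k : ℤ) - 1) * S.card := by rw [Finset.sum_const, nsmul_eq_mul, mul_comm]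
  have hcard : S.card ≤ (FnAux k q n).card := by
    have hsub : S ⊆ (FnAux k q n).image (fun p : ℕ × ℕ => k ^ (q * p.1)) := by
      intro d hd
      rw [hS, Finset.mem_filter] at hd
      obtain ⟨hdvd, hf, hg⟩ := hd
      rw [Nat.mem_divisors] at hdvd
      obtain ⟨a, ha⟩ : ∃ a, d = k ^ (q * a) := by
        by_contra hc; push_neg at hc
        exact hf (by unfold fAux; rw [if_neg]; push_neg; exact hc)
      obtain ⟨m, hm0, hmq⟩ : ∃ m, 0 < m ∧ N / d = m ^ q := by
        unfold gAux at hg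
        split at hg
        · next h => exact ⟨h.choose, h.choose_spec.1, h.choose_spec.2.1⟩
        · split at hg
          · next h => exact h
          · exact absurd rfl hg
      have hmul : k ^ (q * a) * m ^ q = N := by
        rw [← ha, ← hmq]; exact Nat.mul_div_cancel' hdvd.1
      have hkpos : 0 < k ^ (q * a) := Nat.pow_pos (by omega)
      have hka : k ^ (q * a) ≤ N := by
        calc k ^ (q * a) ≤ k ^ (q * a) * m ^ q :=
          Nat.le_mul_of_pos_right _ (Nat.pow_pos hm0)
        _ = N := hmul
      have haN : a < n + 2 := by
        have h2a : 2 ^ a ≤ k ^ (q * a) := by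
          calc 2 ^ a ≤ k ^ a := Nat.pow_le_pow_left hk a
          _ ≤ k ^ (q * a) := Nat.pow_le_pow_right (by omega) (by nlinarith)
        have := Nat.lt_two_pow_self (n := a)
        omega
      have hmN : m - 1 < n + 2 := by
        have : m ≤ m ^ q := Nat.le_self_pow (by omega) m
        have : m ^ q ≤ N := by
          calc m ^ q ≤ k ^ (q * a) * m ^ q := Nat.le_mul_of_pos_left _ hkpos
          _ = N := hmul
        omega
      refine Finset.mem_image.mpr ⟨(a, m - 1), ?_, ha.symm⟩
      unfold FnAux
      rw [Finset.mem_filter, Finset.mem_product, Finset.mem_range, Finset.mem_range]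
      refine ⟨⟨haN, hmN⟩, ?_⟩
      simp only
      rw [Nat.sub_add_cancel hm0]
      exact hmul
    calc S.card ≤ ((FnAux k q n).image (fun p : ℕ × ℕ => k ^ (q * p.1))).card :=
      Finset.card_le_card hsub
    _ ≤ (FnAux k q n).card := Finset.card_image_le
  calc |hAux k q (n + 1)| ≤ ((k : ℤ) - 1) * S.card := le_trans h1 h2
    _ ≤ ((k : ℤ) - 1) * (FnAux k q n).card :=
        mul_le_mul_of_nonneg_left (by exact_mod_cast hcard) (by push_cast; omega)

set_option maxHeartbeats 2000000 in
/-- for real `c > 1/q`,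
`∑_{n=1}^∞ |h(n)|/n^c ≤ (k-1)(1 - k^{-qc})⁻¹ ζ(qc)`. -/
theorem stmt_5 (k q : ℕ) (hk : 2 ≤ k) (hq : 1 ≤ q) :
    ∀ c : ℝ, 1 / (q : ℝ) < c →
      ∑' n : ℕ, |(hAux k q (n + 1) : ℝ)| / ((n + 1 : ℝ) ^ c) ≤
        ((k : ℝ) - 1) * (1 - (k : ℝ) ^ (-((q : ℝ) * c)))⁻¹ *
          (riemannZeta (((q : ℝ) * c : ℝ) : ℂ)).re := by
  intro c hc
  have hq0 : (0:ℝ) < q := by exact_mod_cast hq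
  have hs1 : 1 < (q : ℝ) * c := by
    rw [div_lt_iff₀ hq0] at hc; linarith [hc]
  have hk1 : (1:ℝ) < k := by exact_mod_cast hk
  set s : ℝ := (q : ℝ) * c with hs
  set r : ℝ := (k : ℝ) ^ (-s) with hr
  have hr0 : 0 ≤ r := Real.rpow_nonneg (by positivity) _
  have hr1 : r < 1 := Real.rpow_lt_one_of_one_lt_of_neg hk1 (by linarith)
  have hG : Summable (fun a : ℕ => r ^ a) := summable_geometric_of_lt_one hr0 hr1
  have hGsum : ∑' a : ℕ, r ^ a = (1 - r)⁻¹ := tsum_geometric_of_lt_one hr0 hr1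
  set Z : ℕ → ℝ := fun m => ((m : ℝ) + 1) ^ (-s) with hZdef
  have hZ : Summable Z := by
    have h0 : Summable (fun n : ℕ => (n : ℝ) ^ (-s)) :=
      (Real.summable_nat_rpow).mpr (by linarith)
    have := h0.comp_injective Nat.succ_injective
    refine this.congr fun m => ?_
    simp [Function.comp, Nat.succ_eq_add_one, hZdef]
  have hZsum : ∑' m, Z m = (riemannZeta ((s : ℝ) : ℂ)).re := by
    have hre : 1 < ((s : ℂ)).re := by simpa using hs1
    have hzeta := zeta_eq_tsum_one_div_nat_add_one_cpow hre
    have hterm : ∀ m : ℕ, (1 / ((m : ℂ) + 1) ^ (s : ℂ)) = ((Z m : ℝ) : ℂ) := by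
      intro m
      have h1 : ((m : ℂ) + 1) = (((m : ℝ) + 1 : ℝ) : ℂ) := by push_cast; ring
      rw [h1, ← Complex.ofReal_cpow (by positivity)]
      rw [hZdef]
      simp only []
      rw [Real.rpow_neg (by positivity), ← Complex.ofReal_one, ← Complex.ofReal_div]
      norm_num
    rw [hzeta]
    rw [tsum_congr hterm, ← Complex.ofReal_tsum, Complex.ofReal_re]
  set T : ℕ × ℕ → ℝ := fun p => (((k : ℝ) - 1) * r ^ p.1) * Z p.2 with hTdef
  have hf' : Summable (fun a : ℕ => ((k : ℝ) - 1) * r ^ a) := hG.mul_left _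
  have hZ0 : ∀ m, 0 ≤ Z m := fun m => Real.rpow_nonneg (by positivity) _
  have hf'0 : ∀ a, 0 ≤ ((k : ℝ) - 1) * r ^ a :=
    fun a => mul_nonneg (by linarith) (pow_nonneg hr0 _)
  have hT : Summable T := Summable.mul_of_nonneg hf' hZ hf'0 hZ0
  have hTsum : ∑' p, T p = ((k : ℝ) - 1) * (1 - r)⁻¹ * (riemannZeta ((s : ℝ) : ℂ)).re := by
    have := tsum_mul_tsum_of_summable_norm (R := ℝ)
      (f := fun a : ℕ => ((k : ℝ) - 1) * r ^ a) (g := Z)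
      (by simpa only [Real.norm_eq_abs, abs_of_nonneg (hf'0 _)] using hf')
      (by simpa only [Real.norm_eq_abs, abs_of_nonneg (hZ0 _)] using hZ)
    rw [hTdef, ← this, tsum_mul_left, hGsum, hZsum, mul_assoc]
  have key : ∀ a m : ℕ, r ^ a * Z m = ((k ^ (q * a) * (m + 1) ^ q : ℕ) : ℝ) ^ (-c) := by
    intro a m
    have hk0 : (0:ℝ) ≤ (k:ℝ) := by positivity
    have hm0 : (0:ℝ) ≤ (m:ℝ) + 1 := by positivity
    push_cast
    rw [Real.mul_rpow (by positivity) (by positivity),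
        ← Real.rpow_natCast ((k:ℝ)) (q * a), ← Real.rpow_natCast ((m:ℝ) + 1) q,
        ← Real.rpow_mul hk0, ← Real.rpow_mul hm0,
        hr, ← Real.rpow_natCast ((k:ℝ) ^ (-s)) a, ← Real.rpow_mul hk0, hZdef]
    simp only [hs]
    push_cast
    ring_nf
  set piMap : ℕ × ℕ → ℕ := fun p => k ^ (q * p.1) * (p.2 + 1) ^ q - 1 with hpi
  have hfib := hT.hasSum.tsum_fiberwise piMap
  have hset : ∀ n : ℕ, piMap ⁻¹' {n} = ↑(FnAux k q n) := by
    intro n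
    ext p
    obtain ⟨a, m⟩ := p
    simp only [Set.mem_preimage, Set.mem_singleton_iff, hpi, Finset.coe_filter,
      Set.mem_setOf_eq, Finset.mem_product, Finset.mem_range, FnAux]
    have hkpos : 0 < k ^ (q * a) := Nat.pow_pos (by omega)
    have hmpos : 0 < (m + 1) ^ q := Nat.pow_pos (by omega)
    constructor
    · intro h
      have hprod : k ^ (q * a) * (m + 1) ^ q = n + 1 := by
        have : 1 ≤ k ^ (q * a) * (m + 1) ^ q := Nat.one_le_iff_ne_zero.mpr (by positivity)
        omega
      have h2a : 2 ^ a ≤ k ^ (q * a) := by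
        calc 2 ^ a ≤ k ^ a := Nat.pow_le_pow_left hk a
        _ ≤ k ^ (q * a) := Nat.pow_le_pow_right (by omega) (by nlinarith)
      have hka : k ^ (q * a) ≤ n + 1 := by
        calc k ^ (q * a) ≤ k ^ (q * a) * (m + 1) ^ q := Nat.le_mul_of_pos_right _ hmpos
        _ = n + 1 := hprod
      have hm1 : m + 1 ≤ (m + 1) ^ q := Nat.le_self_pow (by omega) _
      have hmn : (m + 1) ^ q ≤ n + 1 := by
        calc (m + 1) ^ q ≤ k ^ (q * a) * (m + 1) ^ q := Nat.le_mul_of_pos_left _ hkpos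
        _ = n + 1 := hprod
      have := Nat.lt_two_pow_self (n := a)
      exact ⟨⟨by omega, by omega⟩, hprod⟩
    · rintro ⟨_, hprod⟩
      omega
  have hBn : ∀ n : ℕ, (∑' p : piMap ⁻¹' {n}, T p) =
      ((FnAux k q n).card : ℝ) * (((k : ℝ) - 1) * ((n : ℝ) + 1) ^ (-c)) := by
    intro n
    rw [hset n, Finset.tsum_subtype' (FnAux k q n) T]
    rw [Finset.sum_congr rfl
      (fun p hp => show T p = ((k : ℝ) - 1) * ((n : ℝ) + 1) ^ (-c) from ?_),
      Finset.sum_const, nsmul_eq_mul]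
    have hp' : k ^ (q * p.1) * (p.2 + 1) ^ q = n + 1 := (Finset.mem_filter.mp hp).2
    rw [hTdef]
    simp only []
    rw [mul_assoc, key p.1 p.2, hp']
    push_cast
    ring
  have hFB : ∀ n : ℕ, |(hAux k q (n + 1) : ℝ)| / ((n + 1 : ℝ) ^ c) ≤
      ((FnAux k q n).card : ℝ) * (((k : ℝ) - 1) * ((n : ℝ) + 1) ^ (-c)) := by
    intro n
    have hpos : (0:ℝ) < (n : ℝ) + 1 := by positivity
    have hcast : |(hAux k q (n + 1) : ℝ)| ≤ ((k : ℝ) - 1) * ((FnAux k q n).card : ℝ) := by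
      have h := habs_le k q hk hq n
      calc |(hAux k q (n + 1) : ℝ)| = ((|hAux k q (n + 1)| : ℤ) : ℝ) := Int.cast_abs.symm
        _ ≤ ((((k : ℤ) - 1) * (FnAux k q n).card : ℤ) : ℝ) := by exact_mod_cast h
        _ = ((k : ℝ) - 1) * ((FnAux k q n).card : ℝ) := by push_cast; ring
    rw [div_eq_mul_inv, ← Real.rpow_neg (le_of_lt hpos)]
    calc |(hAux k q (n + 1) : ℝ)| * ((n : ℝ) + 1) ^ (-c)
        ≤ (((k : ℝ) - 1) * ((FnAux k q n).card : ℝ)) * ((n : ℝ) + 1) ^ (-c) :=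
          mul_le_mul_of_nonneg_right hcast (Real.rpow_nonneg (le_of_lt hpos) _)
      _ = ((FnAux k q n).card : ℝ) * (((k : ℝ) - 1) * ((n : ℝ) + 1) ^ (-c)) := by ring
  have hFle : ∀ n : ℕ, |(hAux k q (n + 1) : ℝ)| / ((n + 1 : ℝ) ^ c) ≤
      ∑' p : piMap ⁻¹' {n}, T p := fun n => (hBn n) ▸ hFB n
  have hFsum : Summable (fun n : ℕ => |(hAux k q (n + 1) : ℝ)| / ((n + 1 : ℝ) ^ c)) :=
    Summable.of_nonneg_of_le (fun n => by positivity) hFle hfib.summable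
  calc ∑' n : ℕ, |(hAux k q (n + 1) : ℝ)| / ((n + 1 : ℝ) ^ c)
      ≤ ∑' n : ℕ, ∑' p : piMap ⁻¹' {n}, T p := Summable.tsum_le_tsum hFle hFsum hfib.summable
    _ = ∑' p, T p := hfib.tsum_eq
    _ = ((k : ℝ) - 1) * (1 - r)⁻¹ * (riemannZeta ((s : ℝ) : ℂ)).re := hTsum
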